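/- Let R be a commutative ring and e : I ⟶ R, f : J ⟶ R idals of R-modules with (e,f) : I ⊕ J ⟶ R surjective. Then for every R-module M and every n ∈ ℕ, the square with vertices M, Hom_R(I^{⊗n}, M), Hom_R(J^{⊗n}, M), Hom_R(I^{⊗n} ⊗ J^{⊗n}, M) (all maps given by precomposition with the canonical idal maps) is a pullback square of R-modules. -/

import Mathlib

open TensorProduct CategoryTheory

variable (R : Type u) [CommRing R]

/-- Iterated tensor powers `I^{⊗n}` of an `R`-module, bundled in `ModuleCat R`
(with `I^{⊗0} = R` and `I^{⊗(n+1)} = I^{⊗n} ⊗ I`). -/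
noncomputable def TPow (I : Type u) [AddCommGroup I] [Module R I] : ℕ → ModuleCat R
  | 0 => ModuleCat.of R R
  | n + 1 => ModuleCat.of R (TensorProduct R (TPow I n) I)

/-- The `n`-th tensor power idal `e^{⊗n} : I^{⊗n} ⟶ R` of `e : I ⟶ R`. -/
noncomputable def tpowMap {I : Type u} [AddCommGroup I] [Module R I]
    (e : I →ₗ[R] R) : ∀ n, (TPow R I n : Type u) →ₗ[R] R
  | 0 => LinearMap.id
  | n + 1 => TensorProduct.lift ((LinearMap.mul R R).compl₁₂ (tpowMap e n) e)

variable {I J : Type u} [AddCommGroup I] [AddCommGroup J] [Module R I] [Module R J]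

/-- The canonical map `I^{⊗n} ⊗ J^{⊗n} ⟶ I^{⊗n}`, `x ⊗ y ↦ f^{⊗n}(y) • x`. -/
noncomputable def idalContractI (f : J →ₗ[R] R) (n : ℕ) :
    (TPow R I n : Type u) ⊗[R] (TPow R J n : Type u) →ₗ[R] (TPow R I n : Type u) :=
  TensorProduct.lift (((LinearMap.lsmul R (TPow R I n)).comp (tpowMap R f n)).flip)

/-- The canonical map `I^{⊗n} ⊗ J^{⊗n} ⟶ J^{⊗n}`, `x ⊗ y ↦ e^{⊗n}(x) • y`. -/
noncomputable def idalContractJ (e : I →ₗ[R] R) (n : ℕ) :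
    (TPow R I n : Type u) ⊗[R] (TPow R J n : Type u) →ₗ[R] (TPow R J n : Type u) :=
  TensorProduct.lift ((LinearMap.lsmul R (TPow R J n)).comp (tpowMap R e n))

lemma tpowMap_tmul {I : Type u} [AddCommGroup I] [Module R I] (e : I →ₗ[R] R) (n : ℕ)
    (x : (TPow R I n : Type u)) (a : I) :
    tpowMap R e (n + 1) (x ⊗ₜ[R] a) = tpowMap R e n x * e a := by
  rfl

/-- `a^{⊗n}`. -/
noncomputable def tpowElem {I : Type u} [AddCommGroup I] [Module R I] (a : I) :
    ∀ n, (TPow R I n : Type u)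
  | 0 => (1 : R)
  | n + 1 => tpowElem a n ⊗ₜ[R] a

lemma tpowMap_tpowElem {I : Type u} [AddCommGroup I] [Module R I] (e : I →ₗ[R] R) (a : I) :
    ∀ n, tpowMap R e n (tpowElem R a n) = (e a) ^ n
  | 0 => by simp [tpowMap, tpowElem]; rfl
  | n + 1 => by
      rw [tpowElem, tpowMap_tmul, tpowMap_tpowElem e a n, pow_succ]

lemma tpow_idal {I : Type u} [AddCommGroup I] [Module R I] (e : I →ₗ[R] R)
    (he : ∀ x y : I, e x • y = e y • x) :
    ∀ n, ∀ x y : (TPow R I n : Type u), tpowMap R e n x • y = tpowMap R e n y • x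
  | 0 => fun x y => by
      have h : ∀ u v : R, (tpowMap R e 0) u • v = (tpowMap R e 0) v • u := fun u v => by
        simp only [tpowMap, smul_eq_mul]
        exact mul_comm u v
      exact h x y
  | n + 1 => by
      have key : ∀ x y : (TPow R I n : Type u) ⊗[R] I,
          TensorProduct.lift ((LinearMap.mul R R).compl₁₂ (tpowMap R e n) e) x • y =
          TensorProduct.lift ((LinearMap.mul R R).compl₁₂ (tpowMap R e n) e) y • x := by
       intro x y
       induction x using TensorProduct.induction_on with
      | zero => simp
      | add x₁ x₂ h₁ h₂ => rw [map_add, add_smul, h₁, h₂, smul_add]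
      | tmul a b =>
        induction y using TensorProduct.induction_on with
        | zero => simp
        | add y₁ y₂ h₁ h₂ => rw [map_add, add_smul, ← h₁, ← h₂, smul_add]
        | tmul c d =>
          simp only [TensorProduct.lift.tmul, LinearMap.compl₁₂_apply, LinearMap.mul_apply']
          rw [← TensorProduct.smul_tmul_smul,
            ← TensorProduct.smul_tmul_smul, tpow_idal e he n a c, he b d]
      exact key

lemma tpow_cover {I J : Type u} [AddCommGroup I] [AddCommGroup J] [Module R I] [Module R J]
    (e : I →ₗ[R] R) (f : J →ₗ[R] R) (a : I) (b : J) (hab : e a + f b = 1) (n : ℕ) :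
    ∃ (c : (TPow R I n : Type u)) (d : (TPow R J n : Type u)),
      tpowMap R e n c + tpowMap R f n d = 1 := by
  have hco : IsCoprime (e a) (f b) := ⟨1, 1, by rw [one_mul, one_mul, hab]⟩
  obtain ⟨u, v, huv⟩ := hco.pow (m := n) (n := n)
  refine ⟨u • tpowElem R a n, v • tpowElem R b n, ?_⟩
  rw [map_smul, map_smul, tpowMap_tpowElem, tpowMap_tpowElem, smul_eq_mul, smul_eq_mul, huv]

lemma compat {I J : Type u} [AddCommGroup I] [AddCommGroup J] [Module R I] [Module R J]
    (e : I →ₗ[R] R) (f : J →ₗ[R] R)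
    {M : Type u} [AddCommGroup M] [Module R M] {n : ℕ}
    {P : Type u} [AddCommGroup P] [Module R P]
    (g : P →ₗ[R] ((TPow R I n : Type u) →ₗ[R] M))
    (h : P →ₗ[R] ((TPow R J n : Type u) →ₗ[R] M))
    (hcond : (LinearMap.lcomp R M (idalContractI R (I := I) f n)).comp g =
      (LinearMap.lcomp R M (idalContractJ R (J := J) e n)).comp h)
    (p : P) (x : (TPow R I n : Type u)) (y : (TPow R J n : Type u)) :
    (g p) (tpowMap R f n y • x) = (h p) (tpowMap R e n x • y) := by
  have h0 := DFunLike.congr_fun (LinearMap.congr_fun hcond p) (x ⊗ₜ[R] y)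
  simpa [idalContractI, idalContractJ, TensorProduct.lift.tmul] using h0

section Aux2

variable {I J : Type u} [AddCommGroup I] [AddCommGroup J] [Module R I] [Module R J]
  (e : I →ₗ[R] R) (f : J →ₗ[R] R)
  {M : Type u} [AddCommGroup M] [Module R M] {n : ℕ}
  {P : Type u} [AddCommGroup P] [Module R P]

lemma facI_aux (he : ∀ x y : I, e x • y = e y • x)
    (g : P →ₗ[R] ((TPow R I n : Type u) →ₗ[R] M))
    (h : P →ₗ[R] ((TPow R J n : Type u) →ₗ[R] M))
    (hcond : (LinearMap.lcomp R M (idalContractI R (I := I) f n)).comp g =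
      (LinearMap.lcomp R M (idalContractJ R (J := J) e n)).comp h)
    (c : (TPow R I n : Type u)) (d : (TPow R J n : Type u))
    (hcd : tpowMap R e n c + tpowMap R f n d = 1) :
    (LinearMap.smulRightₗ (tpowMap R e n)).comp
      ((LinearMap.applyₗ c).comp g + (LinearMap.applyₗ d).comp h) = g := by
  have hs := compat R e f g h hcond
  refine LinearMap.ext fun p => LinearMap.ext fun x => ?_
  simp only [LinearMap.comp_apply, LinearMap.add_apply, LinearMap.applyₗ_apply_apply,
    LinearMap.smulRightₗ_apply, LinearMap.smulRight_apply]
  have h1 : tpowMap R e n x • (g p) c = (g p) (tpowMap R e n c • x) := by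
    rw [← map_smul, tpow_idal R e he n]
  have h2 : tpowMap R e n x • (h p) d = (g p) (tpowMap R f n d • x) := by
    rw [← map_smul]
    exact (hs p x d).symm
  rw [smul_add, h1, h2, ← map_add, ← add_smul, hcd, one_smul]

lemma facJ_aux (hf : ∀ x y : J, f x • y = f y • x)
    (g : P →ₗ[R] ((TPow R I n : Type u) →ₗ[R] M))
    (h : P →ₗ[R] ((TPow R J n : Type u) →ₗ[R] M))
    (hcond : (LinearMap.lcomp R M (idalContractI R (I := I) f n)).comp g =
      (LinearMap.lcomp R M (idalContractJ R (J := J) e n)).comp h)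
    (c : (TPow R I n : Type u)) (d : (TPow R J n : Type u))
    (hcd : tpowMap R e n c + tpowMap R f n d = 1) :
    (LinearMap.smulRightₗ (tpowMap R f n)).comp
      ((LinearMap.applyₗ c).comp g + (LinearMap.applyₗ d).comp h) = h := by
  have hs := compat R e f g h hcond
  refine LinearMap.ext fun p => LinearMap.ext fun y => ?_
  simp only [LinearMap.comp_apply, LinearMap.add_apply, LinearMap.applyₗ_apply_apply,
    LinearMap.smulRightₗ_apply, LinearMap.smulRight_apply]
  have h1 : tpowMap R f n y • (g p) c = (h p) (tpowMap R e n c • y) := by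
    rw [← map_smul]
    exact hs p c y
  have h2 : tpowMap R f n y • (h p) d = (h p) (tpowMap R f n d • y) := by
    rw [← map_smul, tpow_idal R f hf n]
  rw [smul_add, h1, h2, ← map_add, ← add_smul, hcd, one_smul]

lemma uniq_aux (mL : P →ₗ[R] M)
    (g : P →ₗ[R] ((TPow R I n : Type u) →ₗ[R] M))
    (h : P →ₗ[R] ((TPow R J n : Type u) →ₗ[R] M))
    (hm1 : (LinearMap.smulRightₗ (tpowMap R e n)).comp mL = g)
    (hm2 : (LinearMap.smulRightₗ (tpowMap R f n)).comp mL = h)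
    (c : (TPow R I n : Type u)) (d : (TPow R J n : Type u))
    (hcd : tpowMap R e n c + tpowMap R f n d = 1) :
    mL = (LinearMap.applyₗ c).comp g + (LinearMap.applyₗ d).comp h := by
  refine LinearMap.ext fun p => ?_
  rw [← hm1, ← hm2]
  simp only [LinearMap.comp_apply, LinearMap.add_apply, LinearMap.applyₗ_apply_apply,
    LinearMap.smulRightₗ_apply, LinearMap.smulRight_apply]
  rw [← add_smul, hcd, one_smul]

end Aux2

/-- If idals `e : I ⟶ R` and `f : J ⟶ R` form an idal cover (`I ⊕ J ⟶ R` surjective),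
then for every `R`-module `M` and every `n`, the square
`M → Hom(I^{⊗n}, M), Hom(J^{⊗n}, M) → Hom(I^{⊗n} ⊗ J^{⊗n}, M)`, with maps given by
precomposition with the canonical idal maps, is a pullback of `R`-modules. -/
theorem idal_cover_hom_pullback (e : I →ₗ[R] R) (f : J →ₗ[R] R)
    (he : ∀ x y : I, e x • y = e y • x) (hf : ∀ x y : J, f x • y = f y • x)
    (hsurj : Function.Surjective ⇑(LinearMap.coprod e f))
    (M : Type u) [AddCommGroup M] [Module R M] (n : ℕ) :
    IsPullback
      (ModuleCat.ofHom
        (LinearMap.smulRightₗ (tpowMap R e n) :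
          M →ₗ[R] ((TPow R I n : Type u) →ₗ[R] M)))
      (ModuleCat.ofHom
        (LinearMap.smulRightₗ (tpowMap R f n) :
          M →ₗ[R] ((TPow R J n : Type u) →ₗ[R] M)))
      (ModuleCat.ofHom (LinearMap.lcomp R M (idalContractI R (I := I) f n)))
      (ModuleCat.ofHom (LinearMap.lcomp R M (idalContractJ R (J := J) e n))) := by
  obtain ⟨⟨a, b⟩, hab⟩ := hsurj 1
  rw [LinearMap.coprod_apply] at hab
  obtain ⟨c, d, hcd⟩ := tpow_cover R e f a b hab n
  have hE := tpow_idal R e he n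
  have hF := tpow_idal R f hf n
  have comm : ModuleCat.ofHom
        (LinearMap.smulRightₗ (tpowMap R e n) :
          M →ₗ[R] ((TPow R I n : Type u) →ₗ[R] M)) ≫
        ModuleCat.ofHom (LinearMap.lcomp R M (idalContractI R (I := I) f n)) =
      ModuleCat.ofHom
        (LinearMap.smulRightₗ (tpowMap R f n) :
          M →ₗ[R] ((TPow R J n : Type u) →ₗ[R] M)) ≫
        ModuleCat.ofHom (LinearMap.lcomp R M (idalContractJ R (J := J) e n)) := by
    refine ModuleCat.hom_ext (LinearMap.ext fun m => TensorProduct.ext' fun x y => ?_)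
    show (LinearMap.smulRightₗ (tpowMap R e n) m) (idalContractI R (I := I) f n (x ⊗ₜ y)) =
      (LinearMap.smulRightₗ (tpowMap R f n) m) (idalContractJ R (J := J) e n (x ⊗ₜ y))
    simp only [idalContractI, idalContractJ, TensorProduct.lift.tmul,
      LinearMap.flip_apply, LinearMap.coe_comp, Function.comp_apply, LinearMap.lsmul_apply,
      LinearMap.smulRightₗ_apply, LinearMap.smulRight_apply, map_smul, smul_eq_mul]
    exact smul_comm _ _ _
  refine IsPullback.of_isLimit (Limits.PullbackCone.IsLimit.mk comm
    (fun s => ModuleCat.ofHom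
      (((LinearMap.applyₗ c).comp s.fst.hom) + ((LinearMap.applyₗ d).comp s.snd.hom))) ?_ ?_ ?_)
  · intro s
    exact ModuleCat.hom_ext (facI_aux R e f he
      (s.fst.hom : (s.pt : Type u) →ₗ[R] ((TPow R I n : Type u) →ₗ[R] M))
      (s.snd.hom : (s.pt : Type u) →ₗ[R] ((TPow R J n : Type u) →ₗ[R] M))
      (congrArg ModuleCat.Hom.hom s.condition) c d hcd)
  · intro s
    exact ModuleCat.hom_ext (facJ_aux R e f hf
      (s.fst.hom : (s.pt : Type u) →ₗ[R] ((TPow R I n : Type u) →ₗ[R] M))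
      (s.snd.hom : (s.pt : Type u) →ₗ[R] ((TPow R J n : Type u) →ₗ[R] M))
      (congrArg ModuleCat.Hom.hom s.condition) c d hcd)
  · intro s m hm1 hm2
    exact ModuleCat.hom_ext (uniq_aux R e f
      (m.hom : (s.pt : Type u) →ₗ[R] M)
      (s.fst.hom : (s.pt : Type u) →ₗ[R] ((TPow R I n : Type u) →ₗ[R] M))
      (s.snd.hom : (s.pt : Type u) →ₗ[R] ((TPow R J n : Type u) →ₗ[R] M))
      (congrArg ModuleCat.Hom.hom hm1) (congrArg ModuleCat.Hom.hom hm2) c d hcd)
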